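/- Let G be an open subgroup of GL₂(ℤ_ℓ) and let n₀ ≥ 1 be an integer such that every M ∈ GL₂(ℤ_ℓ) with M ≡ I (mod ℓ^{n₀}) belongs to G. Then for all integers a, b ≥ 0, all n ≥ n₀, and all M₁, M₂ ∈ 𝓜_{a,b}(G)(n), the number of elements of 𝓜_{a,b}(G)(n+1) reducing to M₁ modulo ℓⁿ equals the number of elements of 𝓜_{a,b}(G)(n+1) reducing to M₂ modulo ℓⁿ. -/

import Mathlib

open Matrix Polynomial

/-- Reduction modulo `p^n` on `GL₂(ℤ_p)`. -/
noncomputable def redGL (p : ℕ) [Fact p.Prime] (n : ℕ) :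
    GL (Fin 2) ℤ_[p] →* GL (Fin 2) (ZMod (p ^ n)) :=
  Matrix.GeneralLinearGroup.map (PadicInt.toZModPow n)

/-- `M ≡ I (mod p^k)`. -/
def modI {p : ℕ} [Fact p.Prime] (k : ℕ) (M : GL (Fin 2) ℤ_[p]) : Prop :=
  ∀ i j, ((p : ℤ_[p]) ^ k) ∣ (((M : Matrix (Fin 2) (Fin 2) ℤ_[p]) - 1) i j)

/-- `v_p x = k`, expressed through divisibility (in particular `x ≠ 0`). -/
def valEq {p : ℕ} [Fact p.Prime] (x : ℤ_[p]) (k : ℕ) : Prop :=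
  ((p : ℤ_[p]) ^ k ∣ x) ∧ ¬ ((p : ℤ_[p]) ^ (k + 1) ∣ x)

/-- Condition `E(a,b)`. -/
def CondE {p : ℕ} [Fact p.Prime] (a b : ℕ) (M : GL (Fin 2) ℤ_[p]) : Prop :=
  modI a M ∧ ¬ modI (a + 1) M ∧
    valEq (((M : Matrix (Fin 2) (Fin 2) ℤ_[p]) - 1).det) (2 * a + b)

/-- `𝓜_{a,b}(G)`. -/
def Mset {p : ℕ} [Fact p.Prime] (G : Subgroup (GL (Fin 2) ℤ_[p])) (a b : ℕ) :
    Set (GL (Fin 2) ℤ_[p]) :=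
  {M | M ∈ G ∧ CondE a b M}

/-- `μ_{a,b}(G)`. -/
noncomputable def mu (p : ℕ) [Fact p.Prime] (G : Subgroup (GL (Fin 2) ℤ_[p])) (a b : ℕ) : ℚ :=
  ((redGL p (a + b + 1) '' Mset G a b).ncard : ℚ) /
    ((redGL p (a + b + 1) '' (G : Set (GL (Fin 2) ℤ_[p]))).ncard : ℚ)

/-- `G` is open in `GL₂(ℤ_p)`. -/
def IsOpenSub {p : ℕ} [Fact p.Prime] (G : Subgroup (GL (Fin 2) ℤ_[p])) : Prop :=
  ∃ m : ℕ, 1 ≤ m ∧ ∀ M : GL (Fin 2) ℤ_[p], modI m M → M ∈ G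

/-- The underlying set of the Cartan subgroup `C(c,d)`. -/
def CartanSet {p : ℕ} [Fact p.Prime] (c d : ℤ_[p]) : Set (GL (Fin 2) ℤ_[p]) :=
  {M | ∃ x y : ℤ_[p], (M : Matrix (Fin 2) (Fin 2) ℤ_[p]) = !![x, d * y; y, x + c * y]}

/-- `C` is the Cartan subgroup with parameters `(c,d)`. -/
def IsCartan {p : ℕ} [Fact p.Prime] (c d : ℤ_[p]) (C : Subgroup (GL (Fin 2) ℤ_[p])) : Prop :=
  (C : Set (GL (Fin 2) ℤ_[p])) = CartanSet c d

/-- `(c,d)` are normalized parameters. -/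
def NormalizedParams (p : ℕ) [Fact p.Prime] (c d : ℤ_[p]) : Prop :=
  (c = 0 ∧ d ≠ 0) ∨ (p = 2 ∧ c = 1 ∧ (d = 0 ∨ IsUnit d))

/-- `(c,d)` are parameters of a split Cartan subgroup. -/
def SplitParams (p : ℕ) [Fact p.Prime] (c d : ℤ_[p]) : Prop :=
  (Odd p ∧ c = 0 ∧ ∃ u : ℤ_[p], IsUnit u ∧ d = u ^ 2) ∨ (p = 2 ∧ c = 1 ∧ d = 0)

/-- `(c,d)` are parameters of a nonsplit Cartan subgroup. -/
def NonsplitParams (p : ℕ) [Fact p.Prime] (c d : ℤ_[p]) : Prop :=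
  (Odd p ∧ c = 0 ∧ IsUnit d ∧ ¬ IsSquare d) ∨ (p = 2 ∧ c = 1 ∧ IsUnit d)

/-- Reduction `GL₂(ℤ/p^{n+1}) → GL₂(ℤ/p^n)`. -/
noncomputable def castGL (p : ℕ) [Fact p.Prime] (n : ℕ) :
    GL (Fin 2) (ZMod (p ^ (n + 1))) →* GL (Fin 2) (ZMod (p ^ n)) :=
  Matrix.GeneralLinearGroup.map (ZMod.castHom (pow_dvd_pow p (Nat.le_succ n)) (ZMod (p ^ n)))

section generic

/-- Transfer cardinality of images along compatible maps. -/
lemma ncard_image_eq_of_iff {α β γ : Type*} (f : α → β) (g : α → γ) (U : Set α)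
    (h : ∀ x ∈ U, ∀ y ∈ U, f x = f y ↔ g x = g y) :
    (f '' U).ncard = (g '' U).ncard := by
  rw [← Nat.card_coe_set_eq, ← Nat.card_coe_set_eq]
  refine Nat.card_congr (Equiv.ofBijective (fun b => ⟨g b.2.choose, b.2.choose, b.2.choose_spec.1, rfl⟩) ⟨?_, ?_⟩)
  · rintro ⟨b₁, hb₁⟩ ⟨b₂, hb₂⟩ hb
    have h1 := hb₁.choose_spec
    have h2 := hb₂.choose_spec
    simp only [Subtype.mk.injEq, Subtype.ext_iff] at hb ⊢
    rw [← h1.2, ← h2.2]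
    exact (h _ h1.1 _ h2.1).mpr hb
  · rintro ⟨c, x, hxU, rfl⟩
    refine ⟨⟨f x, x, hxU, rfl⟩, ?_⟩
    have h1 := (⟨x, hxU, rfl⟩ : f x ∈ f '' U).choose_spec
    simp only [Subtype.mk.injEq, Subtype.ext_iff]
    exact (h _ h1.1 _ hxU).mp h1.2

/-- Fibers of a surjective additive hom all have the same cardinality. -/
lemma card_fiber_mul_card {M N : Type*} [AddCommGroup M] [AddCommGroup N]
    (φ : M →+ N) (hs : Function.Surjective φ) (t : N) :
    Nat.card {x : M | φ x = t} * Nat.card N = Nat.card M := by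
  obtain ⟨x₀, hx₀⟩ := hs t
  have e1 : {x : M | φ x = t} ≃ (AddMonoidHom.ker φ) := by
    refine ⟨fun x => ⟨x.1 - x₀, ?_⟩, fun k => ⟨x₀ + k.1, ?_⟩, fun x => by simp, fun k => by simp⟩
    · have := x.2
      simp only [Set.mem_setOf_eq] at this
      simp [AddMonoidHom.mem_ker, this, hx₀]
    · have := k.2
      simp only [AddMonoidHom.mem_ker] at this
      simp [Set.mem_setOf_eq, this, hx₀]
  rw [Nat.card_congr e1]
  have e2 : (M ⧸ AddMonoidHom.ker φ) ≃ N :=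
    (QuotientAddGroup.quotientKerEquivOfSurjective φ hs).toEquiv
  rw [AddSubgroup.card_eq_card_quotient_mul_card_addSubgroup (AddMonoidHom.ker φ),
    Nat.card_congr e2, mul_comm]

lemma ncard_fiber_eq_ncard_fiber {M N : Type*} [AddCommGroup M] [AddCommGroup N]
    [Finite N] (hN : Nat.card N ≠ 0)
    (φ₁ φ₂ : M →+ N) (h₁ : Function.Surjective φ₁) (h₂ : Function.Surjective φ₂)
    (t₁ t₂ : N) :
    {x : M | φ₁ x = t₁}.ncard = {x : M | φ₂ x = t₂}.ncard := by
  rw [← Nat.card_coe_set_eq, ← Nat.card_coe_set_eq]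
  have := (card_fiber_mul_card φ₁ h₁ t₁).trans (card_fiber_mul_card φ₂ h₂ t₂).symm
  exact Nat.eq_of_mul_eq_mul_right (Nat.pos_of_ne_zero hN) this

end generic


section generic2
lemma ncard_nefiber_eq_ncard_nefiber {M N : Type*} [AddCommGroup M] [AddCommGroup N]
    [Finite M] [Finite N] (hN : Nat.card N ≠ 0)
    (φ₁ φ₂ : M →+ N) (h₁ : Function.Surjective φ₁) (h₂ : Function.Surjective φ₂)
    (t₁ t₂ : N) :
    {x : M | φ₁ x ≠ t₁}.ncard = {x : M | φ₂ x ≠ t₂}.ncard := by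
  have k1 : {x : M | φ₁ x ≠ t₁} = {x : M | φ₁ x = t₁}ᶜ := by ext x; simp
  have k2 : {x : M | φ₂ x ≠ t₂} = {x : M | φ₂ x = t₂}ᶜ := by ext x; simp
  have e := ncard_fiber_eq_ncard_fiber hN φ₁ φ₂ h₁ h₂ t₁ t₂
  have c1 := Set.ncard_add_ncard_compl {x : M | φ₁ x = t₁}
  have c2 := Set.ncard_add_ncard_compl {x : M | φ₂ x = t₂}
  rw [k1, k2]
  omega
end generic2

section padic
open PadicInt
variable {p : ℕ} [Fact p.Prime]

lemma toZModPow_eq_iff_dvd (k : ℕ) (x y : ℤ_[p]) :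
    PadicInt.toZModPow k x = PadicInt.toZModPow k y ↔ (p : ℤ_[p]) ^ k ∣ x - y := by
  rw [← sub_eq_zero, ← map_sub, ← RingHom.mem_ker, ker_toZModPow, Ideal.mem_span_singleton]

lemma isUnit_of_not_dvd' {u : ℤ_[p]} (h : ¬ (p : ℤ_[p]) ∣ u) : IsUnit u := by
  by_contra hu
  exact h (PadicInt.norm_lt_one_iff_dvd u |>.mp (PadicInt.not_isUnit_iff.mp hu))

lemma not_dvd_of_isUnit' {u : ℤ_[p]} (h : IsUnit u) : ¬ (p : ℤ_[p]) ∣ u := fun hd =>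
  (PadicInt.prime_p (p := p)).not_unit (isUnit_of_dvd_unit hd h)

lemma valEq_pmul (m k : ℕ) (x : ℤ_[p]) :
    valEq ((p : ℤ_[p]) ^ m * x) (m + k) ↔ valEq x k := by
  have hp : (p : ℤ_[p]) ^ m ≠ 0 := pow_ne_zero _ (PadicInt.prime_p (p := p)).ne_zero
  unfold valEq
  rw [pow_add, mul_dvd_mul_iff_left hp, Nat.add_assoc, pow_add, mul_dvd_mul_iff_left hp]

lemma valEq_extract {x : ℤ_[p]} {k : ℕ} (h : valEq x k) :
    ∃ u : ℤ_[p], IsUnit u ∧ x = (p : ℤ_[p]) ^ k * u := by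
  obtain ⟨u, hu⟩ := h.1
  refine ⟨u, ?_, hu⟩
  apply isUnit_of_not_dvd'
  intro hd
  exact h.2 (hu ▸ (by rw [pow_succ]; exact mul_dvd_mul_left _ hd))

lemma valEq_unit_mul {u : ℤ_[p]} (hu : IsUnit u) (k : ℕ) :
    valEq ((p : ℤ_[p]) ^ k * u) k :=
  ⟨Dvd.intro u rfl, fun hd => by
    rw [pow_succ, mul_dvd_mul_iff_left (pow_ne_zero _ (PadicInt.prime_p (p := p)).ne_zero)] at hd
    exact not_dvd_of_isUnit' hu hd⟩

end padic


section matrixlf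
open Matrix
variable {R S : Type*} [CommRing R] [CommRing S]

/-- The polarization form of `det` on 2×2 matrices:
`det (A + B) = det A + lf A B + det B`. -/
def lf (A Y : Matrix (Fin 2) (Fin 2) R) : R :=
  A 1 1 * Y 0 0 - A 1 0 * Y 0 1 - A 0 1 * Y 1 0 + A 0 0 * Y 1 1

lemma det_add_smul (A Y : Matrix (Fin 2) (Fin 2) R) (r : R) :
    det (A + r • Y) = det A + r * lf A Y + r ^ 2 * det Y := by
  simp only [det_fin_two, lf, Matrix.add_apply, Matrix.smul_apply, smul_eq_mul]
  ring

lemma lf_smul_left (r : R) (A Y : Matrix (Fin 2) (Fin 2) R) :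
    lf (r • A) Y = r * lf A Y := by
  simp only [lf, Matrix.smul_apply, smul_eq_mul]; ring

lemma lf_add_right (A Y Z : Matrix (Fin 2) (Fin 2) R) :
    lf A (Y + Z) = lf A Y + lf A Z := by
  simp only [lf, Matrix.add_apply]; ring

lemma lf_smul_right (r : R) (A Y : Matrix (Fin 2) (Fin 2) R) :
    lf A (r • Y) = r * lf A Y := by
  simp only [lf, Matrix.smul_apply, smul_eq_mul]; ring

lemma lf_map (π : R →+* S) (A Y : Matrix (Fin 2) (Fin 2) R) :
    π (lf A Y) = lf (A.map π) (Y.map π) := by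
  simp only [lf, Matrix.map_apply, map_add, map_sub, _root_.map_mul (f := π)]

/-- `lf C ·` as an additive hom. -/
def lfHom (C : Matrix (Fin 2) (Fin 2) S) : Matrix (Fin 2) (Fin 2) S →+ S where
  toFun Y := lf C Y
  map_zero' := by simp [lf]
  map_add' Y Z := lf_add_right C Y Z

@[simp] lemma lfHom_apply (C Y : Matrix (Fin 2) (Fin 2) S) : lfHom C Y = lf C Y := rfl

lemma lfHom_surjective {C : Matrix (Fin 2) (Fin 2) S}
    (h : ∃ i j, IsUnit (C i j)) : Function.Surjective (lfHom C) := by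
  obtain ⟨i, j, hij⟩ := h
  obtain ⟨u, hu⟩ := hij
  intro t
  fin_cases i <;> fin_cases j <;>
    simp only [Fin.zero_eta, Fin.mk_one, Fin.isValue] at hu
  · exact ⟨!![0, 0; 0, (↑u⁻¹ : S) * t], by
      simp [lf, ← hu, Units.mul_inv_cancel_left]⟩
  · exact ⟨!![0, 0; -((↑u⁻¹ : S) * t), 0], by
      simp [lf, ← hu, Units.mul_inv_cancel_left]⟩
  · exact ⟨!![0, -((↑u⁻¹ : S) * t); 0, 0], by
      simp [lf, ← hu, Units.mul_inv_cancel_left]⟩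
  · exact ⟨!![(↑u⁻¹ : S) * t, 0; 0, 0], by
      simp [lf, ← hu, Units.mul_inv_cancel_left]⟩

end matrixlf


section master
open Matrix PadicInt

variable {p : ℕ} [Fact p.Prime]

/-- The matrix version of condition `E(a,b)`, on `B = M - 1`. -/
def EMat (a b : ℕ) (B : Matrix (Fin 2) (Fin 2) ℤ_[p]) : Prop :=
  (∀ i j, (p : ℤ_[p]) ^ a ∣ B i j) ∧ (¬ ∀ i j, (p : ℤ_[p]) ^ (a + 1) ∣ B i j) ∧
    valEq B.det (2 * a + b)

lemma matmap_eq_iff_dvd (k : ℕ) (X Y : Matrix (Fin 2) (Fin 2) ℤ_[p]) :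
    X.map (toZModPow k) = Y.map (toZModPow k) ↔ ∀ i j, (p : ℤ_[p]) ^ k ∣ (X - Y) i j := by
  constructor
  · intro h i j
    rw [Matrix.sub_apply, ← toZModPow_eq_iff_dvd k (X i j) (Y i j)]
    have := congrFun (congrFun h i) j
    simpa [Matrix.map_apply] using this
  · intro h
    ext i j
    simp only [Matrix.map_apply]
    rw [toZModPow_eq_iff_dvd]
    simpa [Matrix.sub_apply] using h i j

lemma pi1_eq_zero_iff {x : ℤ_[p]} : toZModPow 1 x = 0 ↔ (p : ℤ_[p]) ∣ x := by
  have := toZModPow_eq_iff_dvd (p := p) 1 x 0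
  simpa using this

lemma exists_matrix_quot {A : Matrix (Fin 2) (Fin 2) ℤ_[p]} {k : ℕ}
    (h : ∀ i j, (p : ℤ_[p]) ^ k ∣ A i j) :
    ∃ A₀, A = (p : ℤ_[p]) ^ k • A₀ := by
  refine ⟨fun i j => (h i j).choose, ?_⟩
  ext i j
  show A i j = (p : ℤ_[p]) ^ k * (h i j).choose
  exact (h i j).choose_spec

/-- Entrywise lift from `ZMod (p^1)`. -/
noncomputable def matLift (W : Matrix (Fin 2) (Fin 2) (ZMod (p ^ 1))) :
    Matrix (Fin 2) (Fin 2) ℤ_[p] := fun i j => ((W i j).val : ℤ_[p])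

lemma matLift_spec (W : Matrix (Fin 2) (Fin 2) (ZMod (p ^ 1))) :
    (matLift W).map (toZModPow 1) = W := by
  haveI : NeZero (p ^ 1) := ⟨pow_ne_zero 1 (Fact.out : p.Prime).ne_zero⟩
  ext i j
  simp only [Matrix.map_apply, matLift, map_natCast]
  exact ZMod.natCast_rightInverse (W i j)

lemma EMat_smul_iff {a b n : ℕ} (hna : n ≤ a) (W : Matrix (Fin 2) (Fin 2) ℤ_[p]) :
    EMat a b ((p : ℤ_[p]) ^ n • W) ↔ EMat (a - n) b W := by
  have hp0 : ((p : ℤ_[p]) ^ n) ≠ 0 := pow_ne_zero _ (PadicInt.prime_p (p := p)).ne_zero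
  have key : ∀ m : ℕ, n ≤ m → ∀ x : ℤ_[p],
      ((p : ℤ_[p]) ^ m ∣ (p : ℤ_[p]) ^ n * x ↔ (p : ℤ_[p]) ^ (m - n) ∣ x) := by
    intro m hm x
    conv_lhs => rw [show m = n + (m - n) by omega, pow_add]
    exact mul_dvd_mul_iff_left hp0
  constructor <;> rintro ⟨e1, e2, e3⟩
  · refine ⟨fun i j => ?_, fun hall => e2 fun i j => ?_, ?_⟩
    · have := e1 i j
      simp only [Matrix.smul_apply, smul_eq_mul] at this
      exact (key a hna _).mp this
    · have := hall i j
      simp only [Matrix.smul_apply, smul_eq_mul]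
      rw [key (a + 1) (by omega) _, show a + 1 - n = (a - n) + 1 by omega]
      exact this
    · have hdet : ((p : ℤ_[p]) ^ n • W).det = (p : ℤ_[p]) ^ (2 * n) * W.det := by
        rw [Matrix.det_smul, Fintype.card_fin, ← pow_mul, mul_comm n 2]
      rw [hdet, show 2 * a + b = 2 * n + (2 * (a - n) + b) by omega, valEq_pmul] at e3
      exact e3
  · refine ⟨fun i j => ?_, fun hall => e2 fun i j => ?_, ?_⟩
    · simp only [Matrix.smul_apply, smul_eq_mul]
      exact (key a hna _).mpr (e1 i j)
    · have := hall i j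
      simp only [Matrix.smul_apply, smul_eq_mul] at this
      rw [key (a + 1) (by omega) _, show a + 1 - n = (a - n) + 1 by omega] at this
      exact this
    · have hdet : ((p : ℤ_[p]) ^ n • W).det = (p : ℤ_[p]) ^ (2 * n) * W.det := by
        rw [Matrix.det_smul, Fintype.card_fin, ← pow_mul, mul_comm n 2]
      rw [hdet, show 2 * a + b = 2 * n + (2 * (a - n) + b) by omega, valEq_pmul]
      exact e3

lemma exists_E {A₀ : Matrix (Fin 2) (Fin 2) ℤ_[p]}
    (h : ∃ i j, ¬ (p : ℤ_[p]) ∣ A₀ i j) :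
    ∃ E : Matrix (Fin 2) (Fin 2) ℤ_[p], E.det = 0 ∧ IsUnit (lf A₀ E) := by
  obtain ⟨i, j, hij⟩ := h
  have hu := isUnit_of_not_dvd' hij
  fin_cases i <;> fin_cases j <;>
    simp only [Fin.zero_eta, Fin.mk_one, Fin.isValue] at hu
  · exact ⟨!![0, 0; 0, 1], by simp [Matrix.det_fin_two], by simpa [lf] using hu⟩
  · exact ⟨!![0, 0; -1, 0], by simp [Matrix.det_fin_two], by simpa [lf] using hu⟩
  · exact ⟨!![0, -1; 0, 0], by simp [Matrix.det_fin_two], by simpa [lf] using hu⟩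
  · exact ⟨!![1, 0; 0, 0], by simp [Matrix.det_fin_two], by simpa [lf] using hu⟩

end master


section decomp
open Matrix PadicInt
variable {p : ℕ} [Fact p.Prime]

lemma decompA (a b n : ℕ) (hna : a < n) (A : Matrix (Fin 2) (Fin 2) ℤ_[p])
    (hA : EMat a b A) :
    ∃ (A₀ : Matrix (Fin 2) (Fin 2) ℤ_[p]) (u : ℤ_[p]), IsUnit u ∧
      (∃ i j, ¬ (p : ℤ_[p]) ∣ A₀ i j) ∧
      (∀ Y, (A + (p : ℤ_[p]) ^ n • Y).det =
        (p : ℤ_[p]) ^ (2 * a + b) * u + (p : ℤ_[p]) ^ (n + a) * lf A₀ Y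
          + (p : ℤ_[p]) ^ (2 * n) * Y.det) ∧
      (∀ Y, EMat a b (A + (p : ℤ_[p]) ^ n • Y) ↔
        valEq (A + (p : ℤ_[p]) ^ n • Y).det (2 * a + b)) := by
  obtain ⟨A₀, hAeq⟩ := exists_matrix_quot hA.1
  obtain ⟨u, hu, hdetA⟩ := valEq_extract hA.2.2
  have hA0unit : ∃ i j, ¬ (p : ℤ_[p]) ∣ A₀ i j := by
    by_contra hc
    push_neg at hc
    exact hA.2.1 fun i j => by
      rw [hAeq]
      simp only [Matrix.smul_apply, smul_eq_mul]
      rw [pow_succ]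
      exact mul_dvd_mul_left _ (hc i j)
  refine ⟨A₀, u, hu, hA0unit, ?_, ?_⟩
  · intro Y
    rw [det_add_smul, hdetA, hAeq, lf_smul_left]
    have e2 : ((p : ℤ_[p]) ^ n) ^ 2 = (p : ℤ_[p]) ^ (2 * n) := by
      rw [← pow_mul]; congr 1; omega
    have e3 : (p : ℤ_[p]) ^ n * (p : ℤ_[p]) ^ a = (p : ℤ_[p]) ^ (n + a) := by rw [← pow_add]
    rw [e2, ← mul_assoc, e3]
  · intro Y
    constructor
    · exact fun hE => hE.2.2
    · intro hv
      refine ⟨fun i j => ?_, fun hall => hA.2.1 fun i j => ?_, hv⟩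
      · simp only [Matrix.add_apply, Matrix.smul_apply, smul_eq_mul]
        exact dvd_add (hA.1 i j) ((pow_dvd_pow _ hna.le).trans (dvd_mul_right _ _))
      · have h' := hall i j
        have heq : A i j = (A + (p : ℤ_[p]) ^ n • Y) i j - (p : ℤ_[p]) ^ n * Y i j := by
          simp only [Matrix.add_apply, Matrix.smul_apply, smul_eq_mul]; ring
        rw [heq]
        exact dvd_sub h' ((pow_dvd_pow _ (by omega : a + 1 ≤ n)).trans (dvd_mul_right _ _))

end decomp


section subcases
open Matrix PadicInt
variable {p : ℕ} [Fact p.Prime]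

lemma image_univ_case (a b n : ℕ) (hna : a < n) (hab : a + b < n)
    (A : Matrix (Fin 2) (Fin 2) ℤ_[p]) (hA : EMat a b A) :
    {Y : Matrix (Fin 2) (Fin 2) ℤ_[p] | EMat a b (A + (p : ℤ_[p]) ^ n • Y)} = Set.univ := by
  obtain ⟨A₀, u, hu, _, hdet, hiff⟩ := decompA a b n hna A hA
  ext Y
  simp only [Set.mem_setOf_eq, Set.mem_univ, iff_true]
  rw [hiff Y]
  have e : (A + (p : ℤ_[p]) ^ n • Y).det = (p : ℤ_[p]) ^ (2 * a + b) *
      (u + (p : ℤ_[p]) * ((p : ℤ_[p]) ^ (n + a - (2 * a + b) - 1) * lf A₀ Y +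
        (p : ℤ_[p]) ^ (2 * n - (2 * a + b) - 1) * Y.det)) := by
    rw [hdet Y]
    have e1 : (p : ℤ_[p]) ^ (n + a) =
        (p : ℤ_[p]) ^ (2 * a + b) * (p : ℤ_[p]) * (p : ℤ_[p]) ^ (n + a - (2 * a + b) - 1) := by
      rw [← pow_succ, ← pow_add]; congr 1; omega
    have e2 : (p : ℤ_[p]) ^ (2 * n) =
        (p : ℤ_[p]) ^ (2 * a + b) * (p : ℤ_[p]) * (p : ℤ_[p]) ^ (2 * n - (2 * a + b) - 1) := by
      rw [← pow_succ, ← pow_add]; congr 1; omega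
    rw [e1, e2]; ring
  rw [e]
  refine valEq_unit_mul ?_ _
  apply isUnit_of_not_dvd'
  intro hd
  have h2 : (p : ℤ_[p]) ∣ u := by
    have e3 : u = (u + (p : ℤ_[p]) * ((p : ℤ_[p]) ^ (n + a - (2 * a + b) - 1) * lf A₀ Y +
        (p : ℤ_[p]) ^ (2 * n - (2 * a + b) - 1) * Y.det)) -
        (p : ℤ_[p]) * ((p : ℤ_[p]) ^ (n + a - (2 * a + b) - 1) * lf A₀ Y +
        (p : ℤ_[p]) ^ (2 * n - (2 * a + b) - 1) * Y.det) := by ring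
    rw [e3]
    exact dvd_sub hd (dvd_mul_right _ _)
  exact not_dvd_of_isUnit' hu h2

lemma image_ne_fiber_case (a b n : ℕ) (hna : a < n) (hab : a + b = n)
    (A : Matrix (Fin 2) (Fin 2) ℤ_[p]) (hA : EMat a b A) :
    ∃ C : Matrix (Fin 2) (Fin 2) (ZMod (p ^ 1)), (∃ i j, IsUnit (C i j)) ∧
      ∃ t : ZMod (p ^ 1),
      (fun Y : Matrix (Fin 2) (Fin 2) ℤ_[p] => Y.map (toZModPow 1)) ''
          {Y | EMat a b (A + (p : ℤ_[p]) ^ n • Y)} = {W | lf C W ≠ t} := by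
  obtain ⟨A₀, u, hu, hA0, hdet, hiff⟩ := decompA a b n hna A hA
  set C : Matrix (Fin 2) (Fin 2) (ZMod (p ^ 1)) := A₀.map (toZModPow 1) with hC
  have hna1 : n - a ≠ 0 := by omega
  have hform : ∀ Y : Matrix (Fin 2) (Fin 2) ℤ_[p], (A + (p : ℤ_[p]) ^ n • Y).det =
      (p : ℤ_[p]) ^ (2 * a + b) * (u + (lf A₀ Y + (p : ℤ_[p]) ^ (n - a) * Y.det)) := by
    intro Y
    rw [hdet Y]
    have e1 : (p : ℤ_[p]) ^ (n + a) = (p : ℤ_[p]) ^ (2 * a + b) := by congr 1; omega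
    have e2 : (p : ℤ_[p]) ^ (2 * n) = (p : ℤ_[p]) ^ (2 * a + b) * (p : ℤ_[p]) ^ (n - a) := by
      rw [← pow_add]; congr 1; omega
    rw [e1, e2]; ring
  have hpig : ∀ Y : Matrix (Fin 2) (Fin 2) ℤ_[p],
      toZModPow 1 (u + (lf A₀ Y + (p : ℤ_[p]) ^ (n - a) * Y.det)) =
        toZModPow 1 u + lf C (Y.map (toZModPow 1)) := by
    intro Y
    rw [map_add, map_add, lf_map, pi1_eq_zero_iff.mpr
      (dvd_mul_of_dvd_left (dvd_pow_self _ hna1) Y.det), add_zero, ← hC]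
  have hkey : ∀ Y : Matrix (Fin 2) (Fin 2) ℤ_[p], EMat a b (A + (p : ℤ_[p]) ^ n • Y) ↔
      ¬ (p : ℤ_[p]) ∣ (u + (lf A₀ Y + (p : ℤ_[p]) ^ (n - a) * Y.det)) := by
    intro Y
    rw [hiff Y, hform Y]
    constructor
    · intro hv hd
      exact hv.2 (by rw [pow_succ]; exact mul_dvd_mul_left _ hd)
    · intro hd
      exact valEq_unit_mul (isUnit_of_not_dvd' hd) _
  refine ⟨C, ?_, -(toZModPow 1 u), ?_⟩
  · obtain ⟨i, j, hij⟩ := hA0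
    exact ⟨i, j, by rw [hC]; exact (isUnit_of_not_dvd' hij).map (toZModPow 1)⟩
  · ext W
    simp only [Set.mem_image, Set.mem_setOf_eq]
    constructor
    · rintro ⟨Y, hY, rfl⟩
      have hnd := (hkey Y).mp hY
      intro hlf
      apply hnd
      rw [← pi1_eq_zero_iff, hpig Y, hlf]
      exact add_neg_cancel _
    · intro hW
      refine ⟨matLift W, ?_, matLift_spec W⟩
      rw [hkey (matLift W)]
      intro hd
      apply hW
      have h0 := pi1_eq_zero_iff.mpr hd
      rw [hpig (matLift W), matLift_spec W] at h0
      exact eq_neg_of_add_eq_zero_right h0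

lemma image_fiber_case (a b n : ℕ) (hna : a < n) (hab : n < a + b)
    (A : Matrix (Fin 2) (Fin 2) ℤ_[p]) (hA : EMat a b A) :
    ∃ C : Matrix (Fin 2) (Fin 2) (ZMod (p ^ 1)), (∃ i j, IsUnit (C i j)) ∧
      (fun Y : Matrix (Fin 2) (Fin 2) ℤ_[p] => Y.map (toZModPow 1)) ''
          {Y | EMat a b (A + (p : ℤ_[p]) ^ n • Y)} = {W | lf C W = 0} := by
  obtain ⟨A₀, u, hu, hA0, hdet, hiff⟩ := decompA a b n hna A hA
  set C : Matrix (Fin 2) (Fin 2) (ZMod (p ^ 1)) := A₀.map (toZModPow 1) with hC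
  have hna1 : n - a ≠ 0 := by omega
  have hk1 : a + b - n ≠ 0 := by omega
  have hform : ∀ Y : Matrix (Fin 2) (Fin 2) ℤ_[p], (A + (p : ℤ_[p]) ^ n • Y).det =
      (p : ℤ_[p]) ^ (n + a) * ((p : ℤ_[p]) ^ (a + b - n) * u +
        (lf A₀ Y + (p : ℤ_[p]) ^ (n - a) * Y.det)) := by
    intro Y
    rw [hdet Y]
    have e1 : (p : ℤ_[p]) ^ (2 * a + b) = (p : ℤ_[p]) ^ (n + a) * (p : ℤ_[p]) ^ (a + b - n) := by
      rw [← pow_add]; congr 1; omega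
    have e2 : (p : ℤ_[p]) ^ (2 * n) = (p : ℤ_[p]) ^ (n + a) * (p : ℤ_[p]) ^ (n - a) := by
      rw [← pow_add]; congr 1; omega
    rw [e1, e2]; ring
  have hkey : ∀ Y : Matrix (Fin 2) (Fin 2) ℤ_[p], EMat a b (A + (p : ℤ_[p]) ^ n • Y) ↔
      valEq ((p : ℤ_[p]) ^ (a + b - n) * u + (lf A₀ Y + (p : ℤ_[p]) ^ (n - a) * Y.det))
        (a + b - n) := by
    intro Y
    rw [hiff Y, hform Y, show 2 * a + b = (n + a) + (a + b - n) by omega, valEq_pmul]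
  have hpig : ∀ Y : Matrix (Fin 2) (Fin 2) ℤ_[p],
      toZModPow 1 ((p : ℤ_[p]) ^ (a + b - n) * u + (lf A₀ Y + (p : ℤ_[p]) ^ (n - a) * Y.det)) =
        lf C (Y.map (toZModPow 1)) := by
    intro Y
    rw [map_add, map_add, lf_map, pi1_eq_zero_iff.mpr
      (dvd_mul_of_dvd_left (dvd_pow_self _ hna1) Y.det), add_zero,
      pi1_eq_zero_iff.mpr (dvd_mul_of_dvd_left (dvd_pow_self _ hk1) u), zero_add, ← hC]
  refine ⟨C, ?_, ?_⟩
  · obtain ⟨i, j, hij⟩ := hA0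
    exact ⟨i, j, by rw [hC]; exact (isUnit_of_not_dvd' hij).map (toZModPow 1)⟩
  · ext W
    simp only [Set.mem_image, Set.mem_setOf_eq]
    constructor
    · rintro ⟨Y, hY, rfl⟩
      have hv := (hkey Y).mp hY
      have hpd : (p : ℤ_[p]) ∣ ((p : ℤ_[p]) ^ (a + b - n) * u +
          (lf A₀ Y + (p : ℤ_[p]) ^ (n - a) * Y.det)) :=
        (dvd_pow_self (p : ℤ_[p]) hk1).trans hv.1
      rw [← hpig Y]
      exact pi1_eq_zero_iff.mpr hpd
    · intro hW
      have hpd : (p : ℤ_[p]) ∣ (lf A₀ (matLift W) +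
          (p : ℤ_[p]) ^ (n - a) * (matLift W).det) := by
        rw [← pi1_eq_zero_iff, map_add, lf_map, matLift_spec W, pi1_eq_zero_iff.mpr
          (dvd_mul_of_dvd_left (dvd_pow_self _ hna1) (matLift W).det), add_zero, ← hC]
        exact hW
      set Y₀ : Matrix (Fin 2) (Fin 2) ℤ_[p] := matLift W with hY₀
      obtain ⟨t, ht⟩ := hpd
      obtain ⟨E, hdE, huE⟩ := exists_E hA0
      set w : ℤ_[p] := lf A₀ E + (p : ℤ_[p]) ^ (n - a) * lf Y₀ E with hwdef
      have hw : IsUnit w := by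
        apply isUnit_of_not_dvd'
        intro hd
        have h2 := dvd_sub hd (dvd_mul_of_dvd_left (dvd_pow_self _ hna1) (lf Y₀ E))
        rw [hwdef, add_sub_cancel_right] at h2
        exact not_dvd_of_isUnit' huE h2
      obtain ⟨wu, hwu⟩ := hw
      set z : ℤ_[p] := -t * ↑wu⁻¹ with hzdef
      set Y : Matrix (Fin 2) (Fin 2) ℤ_[p] := Y₀ + ((p : ℤ_[p]) * z) • E with hYdef
      have hzw : t + z * w = 0 := by
        rw [hzdef, ← hwu, neg_mul, neg_mul, Units.inv_mul_cancel_right]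
        ring
      have hg : lf A₀ Y + (p : ℤ_[p]) ^ (n - a) * Y.det = 0 := by
        have hdetY : Y.det = Y₀.det + ((p : ℤ_[p]) * z) * lf Y₀ E := by
          rw [hYdef, det_add_smul, hdE]; ring
        have hlf : lf A₀ Y = lf A₀ Y₀ + ((p : ℤ_[p]) * z) * lf A₀ E := by
          rw [hYdef, lf_add_right, lf_smul_right]
        calc lf A₀ Y + (p : ℤ_[p]) ^ (n - a) * Y.det
            = (lf A₀ Y₀ + (p : ℤ_[p]) ^ (n - a) * Y₀.det) + ((p : ℤ_[p]) * z) * w := by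
              rw [hlf, hdetY, hwdef]; ring
          _ = (p : ℤ_[p]) * (t + z * w) := by rw [ht]; ring
          _ = 0 := by rw [hzw, mul_zero]
      have hmap : Y.map (toZModPow 1) = W := by
        ext i j
        have h0 : toZModPow 1 ((p : ℤ_[p]) * z * E i j) = 0 :=
          pi1_eq_zero_iff.mpr (by rw [mul_assoc]; exact dvd_mul_right _ _)
        simp only [hYdef, Matrix.map_apply, Matrix.add_apply, Matrix.smul_apply, smul_eq_mul,
          map_add, h0, add_zero]
        have := congrFun (congrFun (matLift_spec W) i) j
        rw [hY₀]
        simpa [Matrix.map_apply] using this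
      refine ⟨Y, ?_, hmap⟩
      rw [hkey Y, hg, add_zero]
      exact valEq_unit_mul hu _

end subcases



section masterlemma
open Matrix PadicInt
variable {p : ℕ} [Fact p.Prime]

lemma master_count (a b n : ℕ) (hn : 1 ≤ n) (A₁ A₂ : Matrix (Fin 2) (Fin 2) ℤ_[p])
    (h1 : EMat a b A₁) (h2 : EMat a b A₂) :
    ((fun Y : Matrix (Fin 2) (Fin 2) ℤ_[p] => Y.map (toZModPow 1)) ''
        {Y | EMat a b (A₁ + (p : ℤ_[p]) ^ n • Y)}).ncard =
    ((fun Y : Matrix (Fin 2) (Fin 2) ℤ_[p] => Y.map (toZModPow 1)) ''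
        {Y | EMat a b (A₂ + (p : ℤ_[p]) ^ n • Y)}).ncard := by
  haveI : NeZero (p ^ 1) := ⟨pow_ne_zero 1 (Fact.out : p.Prime).ne_zero⟩
  rcases le_or_gt n a with hna | hna
  · -- case n ≤ a
    have key : ∀ A : Matrix (Fin 2) (Fin 2) ℤ_[p], EMat a b A →
        ((fun Y : Matrix (Fin 2) (Fin 2) ℤ_[p] => Y.map (toZModPow 1)) ''
          {Y | EMat a b (A + (p : ℤ_[p]) ^ n • Y)}).ncard =
        ((fun W : Matrix (Fin 2) (Fin 2) ℤ_[p] => W.map (toZModPow 1)) ''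
          {W | EMat (a - n) b W}).ncard := by
      intro A hA
      obtain ⟨A₀, hAeq⟩ :=
        exists_matrix_quot (fun i j => (pow_dvd_pow (p : ℤ_[p]) hna).trans (hA.1 i j))
      have hset : {Y : Matrix (Fin 2) (Fin 2) ℤ_[p] | EMat a b (A + (p : ℤ_[p]) ^ n • Y)} =
          {Y | EMat (a - n) b (A₀ + Y)} := by
        ext Y
        simp only [Set.mem_setOf_eq]
        rw [hAeq, ← smul_add, EMat_smul_iff hna]
      rw [hset, ncard_image_eq_of_iff (fun Y : Matrix (Fin 2) (Fin 2) ℤ_[p] =>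
          Y.map (toZModPow 1)) (fun Y => (A₀ + Y).map (toZModPow 1)) _ ?_]
      · congr 1
        ext Z
        constructor
        · rintro ⟨Y, hY, rfl⟩
          exact ⟨A₀ + Y, hY, rfl⟩
        · rintro ⟨W, hW, rfl⟩
          exact ⟨W - A₀, by simpa using hW, by simp⟩
      · intro X _ Y _
        rw [matmap_eq_iff_dvd, matmap_eq_iff_dvd]
        have : (A₀ + X) - (A₀ + Y) = X - Y := by abel
        rw [this]
    rw [key A₁ h1, key A₂ h2]
  · rcases lt_trichotomy (a + b) n with h3 | h3 | h3
    · rw [image_univ_case a b n hna h3 A₁ h1, image_univ_case a b n hna h3 A₂ h2]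
    · obtain ⟨C₁, hC₁, t₁, he₁⟩ := image_ne_fiber_case a b n hna h3 A₁ h1
      obtain ⟨C₂, hC₂, t₂, he₂⟩ := image_ne_fiber_case a b n hna h3 A₂ h2
      rw [he₁, he₂]
      have hcard : Nat.card (ZMod (p ^ 1)) ≠ 0 := Nat.card_pos.ne'
      have := ncard_nefiber_eq_ncard_nefiber hcard (lfHom C₁) (lfHom C₂)
        (lfHom_surjective hC₁) (lfHom_surjective hC₂) t₁ t₂
      simpa only [lfHom_apply] using this
    · obtain ⟨C₁, hC₁, he₁⟩ := image_fiber_case a b n hna h3 A₁ h1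
      obtain ⟨C₂, hC₂, he₂⟩ := image_fiber_case a b n hna h3 A₂ h2
      rw [he₁, he₂]
      have hcard : Nat.card (ZMod (p ^ 1)) ≠ 0 := Nat.card_pos.ne'
      have := ncard_fiber_eq_ncard_fiber hcard (lfHom C₁) (lfHom C₂)
        (lfHom_surjective hC₁) (lfHom_surjective hC₂) 0 0
      simpa only [lfHom_apply] using this
end masterlemma


section glue
open Matrix PadicInt
variable {p : ℕ} [Fact p.Prime]

lemma cast_red (n : ℕ) (x : GL (Fin 2) ℤ_[p]) :
    castGL p n (redGL p (n + 1) x) = redGL p n x := by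
  have hc : (castGL p n).comp (redGL p (n + 1)) = redGL p n := by
    unfold castGL redGL
    rw [← Matrix.GeneralLinearGroup.map_comp,
      PadicInt.zmod_cast_comp_toZModPow n (n + 1) (Nat.le_succ n)]
  rw [← hc]
  rfl

lemma redGL_val (m : ℕ) (g : GL (Fin 2) ℤ_[p]) :
    (redGL p m g : Matrix (Fin 2) (Fin 2) (ZMod (p ^ m)))
      = (g : Matrix (Fin 2) (Fin 2) ℤ_[p]).map (toZModPow m) := rfl

lemma condE_iff_EMat (a b : ℕ) (M : GL (Fin 2) ℤ_[p]) :
    CondE a b M ↔ EMat a b ((M : Matrix (Fin 2) (Fin 2) ℤ_[p]) - 1) := Iff.rfl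

lemma dvd_mul_unit_iff (N : GL (Fin 2) ℤ_[p]) (V : Matrix (Fin 2) (Fin 2) ℤ_[p]) (d : ℤ_[p]) :
    (∀ i j, d ∣ (V * (N : Matrix (Fin 2) (Fin 2) ℤ_[p])) i j) ↔ (∀ i j, d ∣ V i j) := by
  constructor
  · intro h i j
    have hV : V = (V * (N : Matrix (Fin 2) (Fin 2) ℤ_[p])) *
        ((N⁻¹ : GL (Fin 2) ℤ_[p]) : Matrix (Fin 2) (Fin 2) ℤ_[p]) := by
      rw [Matrix.mul_assoc, ← Units.val_mul, mul_inv_cancel, Units.val_one, Matrix.mul_one]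
    rw [hV, Matrix.mul_apply]
    exact Finset.dvd_sum fun k _ => (h i k).mul_right _
  · intro h i j
    rw [Matrix.mul_apply]
    exact Finset.dvd_sum fun k _ => (h i k).mul_right _

lemma isUnit_one_add_psmul (n : ℕ) (hn : 1 ≤ n) (Y : Matrix (Fin 2) (Fin 2) ℤ_[p]) :
    IsUnit ((1 : Matrix (Fin 2) (Fin 2) ℤ_[p]) + (p : ℤ_[p]) ^ n • Y) := by
  rw [Matrix.isUnit_iff_isUnit_det]
  have hd : ((1 : Matrix (Fin 2) (Fin 2) ℤ_[p]) + (p : ℤ_[p]) ^ n • Y).det =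
      1 + (p : ℤ_[p]) * ((p : ℤ_[p]) ^ (n - 1) * lf 1 Y + (p : ℤ_[p]) ^ (2 * n - 1) * Y.det) := by
    rw [det_add_smul]
    have e1 : (p : ℤ_[p]) ^ n = (p : ℤ_[p]) * (p : ℤ_[p]) ^ (n - 1) := by
      rw [← pow_succ']; congr 1; omega
    have e2 : ((p : ℤ_[p]) ^ n) ^ 2 = (p : ℤ_[p]) * (p : ℤ_[p]) ^ (2 * n - 1) := by
      rw [← pow_mul, ← pow_succ']; congr 1; omega
    rw [Matrix.det_one, e2, e1]; ring
  rw [hd]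
  apply isUnit_of_not_dvd'
  intro hdvd
  have h2 : (p : ℤ_[p]) ∣ 1 := by
    have e3 : (1 : ℤ_[p]) = (1 + (p : ℤ_[p]) * ((p : ℤ_[p]) ^ (n - 1) * lf 1 Y +
        (p : ℤ_[p]) ^ (2 * n - 1) * Y.det)) - (p : ℤ_[p]) * ((p : ℤ_[p]) ^ (n - 1) * lf 1 Y +
        (p : ℤ_[p]) ^ (2 * n - 1) * Y.det) := by ring
    rw [e3]
    exact dvd_sub hdvd (dvd_mul_right _ _)
  exact (PadicInt.prime_p (p := p)).not_unit (isUnit_of_dvd_one h2)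

end glue


section fibercard
open Matrix PadicInt
variable {p : ℕ} [Fact p.Prime]

lemma fiber_card (G : Subgroup (GL (Fin 2) ℤ_[p])) (n₀ n a b : ℕ)
    (hG : ∀ M : GL (Fin 2) ℤ_[p], modI n₀ M → M ∈ G) (hn : n₀ ≤ n) (hn1 : 1 ≤ n)
    (N : GL (Fin 2) ℤ_[p]) (hN : N ∈ Mset G a b) :
    {M' : GL (Fin 2) (ZMod (p ^ (n + 1))) | M' ∈ redGL p (n + 1) '' Mset G a b ∧
        castGL p n M' = redGL p n N}.ncard =
    ((fun Y : Matrix (Fin 2) (Fin 2) ℤ_[p] => Y.map (toZModPow 1)) ''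
        {Y | EMat a b (((N : Matrix (Fin 2) (Fin 2) ℤ_[p]) - 1) + (p : ℤ_[p]) ^ n • Y)}).ncard := by
  have hpn0 : ((p : ℤ_[p]) ^ n) ≠ 0 := pow_ne_zero _ (PadicInt.prime_p (p := p)).ne_zero
  set Nv : Matrix (Fin 2) (Fin 2) ℤ_[p] := (N : Matrix (Fin 2) (Fin 2) ℤ_[p]) with hNv
  set U : Set (Matrix (Fin 2) (Fin 2) ℤ_[p]) :=
    {Y | EMat a b ((1 + (p : ℤ_[p]) ^ n • Y) * Nv - 1)} with hU
  -- Step A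
  have hSA : {M' : GL (Fin 2) (ZMod (p ^ (n + 1))) | M' ∈ redGL p (n + 1) '' Mset G a b ∧
        castGL p n M' = redGL p n N} =
      redGL p (n + 1) '' {N' | N' ∈ Mset G a b ∧ redGL p n N' = redGL p n N} := by
    ext M'
    simp only [Set.mem_setOf_eq, Set.mem_image]
    constructor
    · rintro ⟨⟨N', hN', rfl⟩, hcast⟩
      exact ⟨N', ⟨hN', by rwa [cast_red n N'] at hcast⟩, rfl⟩
    · rintro ⟨N', ⟨hN', hred⟩, rfl⟩
      exact ⟨⟨N', hN', rfl⟩, by rw [cast_red n N', hred]⟩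
  rw [hSA]
  -- Step B : pass to matrices
  have hinj : Function.Injective (fun g : GL (Fin 2) (ZMod (p ^ (n + 1))) =>
      (g : Matrix (Fin 2) (Fin 2) (ZMod (p ^ (n + 1))))) := fun x y h => Units.ext h
  rw [← Set.ncard_image_of_injective _ hinj, Set.image_image]
  -- Step C
  have hC : (fun (N' : GL (Fin 2) ℤ_[p]) =>
        ((redGL p (n + 1) N' : GL (Fin 2) (ZMod (p ^ (n + 1)))) :
          Matrix (Fin 2) (Fin 2) (ZMod (p ^ (n + 1))))) ''
        {N' | N' ∈ Mset G a b ∧ redGL p n N' = redGL p n N} =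
      (fun Y : Matrix (Fin 2) (Fin 2) ℤ_[p] =>
        ((1 + (p : ℤ_[p]) ^ n • Y) * Nv).map (toZModPow (n + 1))) '' U := by
    ext Z
    simp only [Set.mem_image, Set.mem_setOf_eq]
    constructor
    · rintro ⟨N', ⟨hN'M, hN'red⟩, rfl⟩
      have hKred : redGL p n (N' * N⁻¹) = 1 := by
        rw [MonoidHom.map_mul, MonoidHom.map_inv, hN'red, mul_inv_cancel]
      have hdvd : ∀ i j, (p : ℤ_[p]) ^ n ∣
          ((((N' * N⁻¹ : GL (Fin 2) ℤ_[p])) : Matrix (Fin 2) (Fin 2) ℤ_[p]) - 1) i j := by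
        rw [← matmap_eq_iff_dvd]
        have h1 : (((N' * N⁻¹ : GL (Fin 2) ℤ_[p])) :
            Matrix (Fin 2) (Fin 2) ℤ_[p]).map (toZModPow n) = 1 := by
          rw [← redGL_val n (N' * N⁻¹), hKred, Units.val_one]
        rw [h1, Matrix.map_one _ (map_zero _) (map_one _)]
      obtain ⟨Y, hY⟩ := exists_matrix_quot hdvd
      have hKval : (((N' * N⁻¹ : GL (Fin 2) ℤ_[p])) : Matrix (Fin 2) (Fin 2) ℤ_[p]) =
          1 + (p : ℤ_[p]) ^ n • Y := by
        rw [← hY]; abel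
      have hval : (1 + (p : ℤ_[p]) ^ n • Y) * Nv = (N' : Matrix (Fin 2) (Fin 2) ℤ_[p]) := by
        rw [← hKval, hNv, Units.val_mul, Matrix.mul_assoc, ← Units.val_mul,
          inv_mul_cancel, Units.val_one, Matrix.mul_one]
      refine ⟨Y, ?_, ?_⟩
      · show EMat a b _
        rw [hval]
        exact (condE_iff_EMat a b N').mp hN'M.2
      · rw [redGL_val, hval]
    · rintro ⟨Y, hYU, rfl⟩
      obtain ⟨K, hK⟩ := isUnit_one_add_psmul n hn1 Y
      have hKNval : ((K * N : GL (Fin 2) ℤ_[p]) : Matrix (Fin 2) (Fin 2) ℤ_[p]) =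
          (1 + (p : ℤ_[p]) ^ n • Y) * Nv := by
        rw [Units.val_mul, hK, hNv]
      refine ⟨K * N, ⟨⟨?_, ?_⟩, ?_⟩, ?_⟩
      · apply G.mul_mem _ hN.1
        apply hG
        intro i j
        rw [hK]
        simp only [add_sub_cancel_left, Matrix.smul_apply, smul_eq_mul]
        exact dvd_mul_of_dvd_left (pow_dvd_pow _ hn) _
      · rw [condE_iff_EMat, hKNval]
        exact hYU
      · apply Units.ext
        rw [redGL_val, redGL_val, matmap_eq_iff_dvd]
        have hdiff : ((K * N : GL (Fin 2) ℤ_[p]) : Matrix (Fin 2) (Fin 2) ℤ_[p]) - Nv =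
            (p : ℤ_[p]) ^ n • (Y * Nv) := by
          rw [hKNval, Matrix.add_mul, Matrix.one_mul, Matrix.smul_mul]
          abel
        rw [hdiff]
        intro i j
        simp only [Matrix.smul_apply, smul_eq_mul]
        exact dvd_mul_right _ _
      · rw [redGL_val, hKNval]
  rw [hC]
  -- Step D
  rw [ncard_image_eq_of_iff
      (fun Y : Matrix (Fin 2) (Fin 2) ℤ_[p] =>
        ((1 + (p : ℤ_[p]) ^ n • Y) * Nv).map (toZModPow (n + 1)))
      (fun Y : Matrix (Fin 2) (Fin 2) ℤ_[p] => Y.map (toZModPow 1)) U ?_]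
  · -- Step E
    have hUalign : U = {Y : Matrix (Fin 2) (Fin 2) ℤ_[p] |
        EMat a b ((Nv - 1) + (p : ℤ_[p]) ^ n • (Y * Nv))} := by
      ext Y
      simp only [hU, Set.mem_setOf_eq]
      have heq : (1 + (p : ℤ_[p]) ^ n • Y) * Nv - 1 =
          (Nv - 1) + (p : ℤ_[p]) ^ n • (Y * Nv) := by
        rw [Matrix.add_mul, Matrix.one_mul, Matrix.smul_mul]
        abel
      rw [heq]
    rw [ncard_image_eq_of_iff
        (fun Y : Matrix (Fin 2) (Fin 2) ℤ_[p] => Y.map (toZModPow 1))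
        (fun Y : Matrix (Fin 2) (Fin 2) ℤ_[p] => (Y * Nv).map (toZModPow 1)) U ?_]
    · have himg : (fun Y : Matrix (Fin 2) (Fin 2) ℤ_[p] => (Y * Nv).map (toZModPow 1)) '' U =
          (fun Y : Matrix (Fin 2) (Fin 2) ℤ_[p] => Y.map (toZModPow 1)) ''
            {Y | EMat a b ((Nv - 1) + (p : ℤ_[p]) ^ n • Y)} := by
        have hcomp : (fun Y : Matrix (Fin 2) (Fin 2) ℤ_[p] => (Y * Nv).map (toZModPow 1)) =
            (fun Z : Matrix (Fin 2) (Fin 2) ℤ_[p] => Z.map (toZModPow 1)) ∘ (fun Y => Y * Nv) :=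
          rfl
        have himg2 : (fun Y : Matrix (Fin 2) (Fin 2) ℤ_[p] => Y * Nv) '' U =
            {Y : Matrix (Fin 2) (Fin 2) ℤ_[p] | EMat a b ((Nv - 1) + (p : ℤ_[p]) ^ n • Y)} := by
          ext W
          simp only [Set.mem_image, Set.mem_setOf_eq]
          constructor
          · rintro ⟨Y, hY, rfl⟩
            rw [hUalign] at hY
            exact hY
          · intro hW
            have hWN : W * ((N⁻¹ : GL (Fin 2) ℤ_[p]) : Matrix (Fin 2) (Fin 2) ℤ_[p]) * Nv = W := by
              rw [hNv, Matrix.mul_assoc, ← Units.val_mul, inv_mul_cancel, Units.val_one,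
                Matrix.mul_one]
            refine ⟨W * ((N⁻¹ : GL (Fin 2) ℤ_[p]) : Matrix (Fin 2) (Fin 2) ℤ_[p]), ?_, hWN⟩
            rw [hUalign]
            show EMat a b _
            rw [hWN]
            exact hW
        rw [hcomp, Set.image_comp, himg2]
      rw [himg, hNv]
    · intro X _ Y _
      rw [matmap_eq_iff_dvd, matmap_eq_iff_dvd]
      have hd : X * Nv - Y * Nv = (X - Y) * Nv := (sub_mul X Y Nv).symm
      rw [hd]
      simp only [pow_one]
      exact (dvd_mul_unit_iff N (X - Y) (p : ℤ_[p])).symm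
  · intro X _ Y _
    rw [matmap_eq_iff_dvd, matmap_eq_iff_dvd]
    have hdiff : (1 + (p : ℤ_[p]) ^ n • X) * Nv - (1 + (p : ℤ_[p]) ^ n • Y) * Nv =
        (p : ℤ_[p]) ^ n • ((X - Y) * Nv) := by
      rw [← sub_mul, add_sub_add_left_eq_sub, ← smul_sub, Matrix.smul_mul]
    rw [hdiff]
    have hcanc : ∀ c : ℤ_[p], ((p : ℤ_[p]) ^ (n + 1) ∣ (p : ℤ_[p]) ^ n * c ↔ (p : ℤ_[p]) ∣ c) := by
      intro c
      rw [pow_succ]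
      exact mul_dvd_mul_iff_left hpn0
    simp only [Matrix.smul_apply, smul_eq_mul, pow_one]
    constructor
    · intro h
      exact (dvd_mul_unit_iff N (X - Y) (p : ℤ_[p])).mp (fun i j => (hcanc _).mp (h i j))
    · intro h i j
      exact (hcanc _).mpr ((dvd_mul_unit_iff N (X - Y) (p : ℤ_[p])).mpr h i j)

end fibercard


/-- for an open subgroup `G` of `GL₂(ℤ_ℓ)`, the number of lifts from
`𝓜_{a,b}(G)(n)` to `𝓜_{a,b}(G)(n+1)` is independent of the matrix. -/
theorem Mset_GL2_lift_count_independent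
    (p : ℕ) [Fact p.Prime] (G : Subgroup (GL (Fin 2) ℤ_[p]))
    (n₀ : ℕ) (hn₀ : 1 ≤ n₀) (hG : ∀ M : GL (Fin 2) ℤ_[p], modI n₀ M → M ∈ G)
    (a b n : ℕ) (hn : n₀ ≤ n)
    (M₁ M₂ : GL (Fin 2) (ZMod (p ^ n)))
    (h₁ : M₁ ∈ redGL p n '' Mset G a b) (h₂ : M₂ ∈ redGL p n '' Mset G a b) :
    {M' : GL (Fin 2) (ZMod (p ^ (n + 1))) |
        M' ∈ redGL p (n + 1) '' Mset G a b ∧ castGL p n M' = M₁}.ncard =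
    {M' : GL (Fin 2) (ZMod (p ^ (n + 1))) |
        M' ∈ redGL p (n + 1) '' Mset G a b ∧ castGL p n M' = M₂}.ncard := by
  obtain ⟨N₁, hN₁M, hN₁red⟩ := h₁
  obtain ⟨N₂, hN₂M, hN₂red⟩ := h₂
  rw [← hN₁red, ← hN₂red,
    fiber_card G n₀ n a b hG hn (le_trans hn₀ hn) N₁ hN₁M,
    fiber_card G n₀ n a b hG hn (le_trans hn₀ hn) N₂ hN₂M]
  exact master_count a b n (le_trans hn₀ hn) _ _
    ((condE_iff_EMat a b N₁).mp hN₁M.2) ((condE_iff_EMat a b N₂).mp hN₂M.2)
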